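/- Let G be a finite 2-Frobenius group with respect to normal subgroups K ≤ L, and let D be a subgroup of G containing K such that D/K is a Frobenius complement of L/K in G/K. Then D is a Hall subgroup of G, i.e., |D| and the index |G : D| are coprime. -/

import Mathlib

private lemma card_dvd_of_free_action {H α : Type*} [Group H] [Finite H] [Finite α]
    [MulAction H α] (hf : ∀ (g : H) (a : α), g • a = a → g = 1) :
    Nat.card H ∣ Nat.card α := by
  classical
  have key : ∀ a : α, MulAction.stabilizer H a = ⊥ := fun a => by
    ext g
    simp only [MulAction.mem_stabilizer_iff, Subgroup.mem_bot]
    exact ⟨hf g a, fun h => h ▸ one_smul H a⟩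
  have e : α ≃ (MulAction.orbitRel.Quotient H α) × H := by
    refine (MulAction.selfEquivSigmaOrbits H α).trans ?_
    refine (Equiv.sigmaCongrRight fun ω => ?_).trans (Equiv.sigmaEquivProd _ _)
    refine (MulAction.orbitEquivQuotientStabilizer H ω.out).trans ?_
    rw [key]
    exact (QuotientGroup.quotientBot (G := H)).toEquiv
  rw [Nat.card_congr e, Nat.card_prod]
  exact dvd_mul_left _ _

private lemma frobenius_coprime {G : Type*} [Group G] [Finite G] (N H : Subgroup G)
    [hN : N.Normal]
    (hc : ∀ h ∈ H, h ≠ 1 → ∀ n ∈ N, Commute h n → n = 1) :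
    Nat.Coprime (Nat.card N) (Nat.card H) := by
  classical
  letI act : MulAction H {n : N // n ≠ 1} :=
    { smul := fun h n =>
        ⟨⟨(h : G) * (n.1 : G) * (h : G)⁻¹, hN.conj_mem _ n.1.2 _⟩, by
          intro heq
          apply n.2
          have h1 : (h : G) * (n.1 : G) * (h : G)⁻¹ = 1 :=
            congrArg (fun x : N => (x : G)) heq
          rw [mul_inv_eq_one, mul_eq_left] at h1
          exact OneMemClass.coe_eq_one.mp h1⟩
      one_smul := fun n => by
        apply Subtype.ext; apply Subtype.ext
        show ((1 : H) : G) * (n.1 : G) * ((1 : H) : G)⁻¹ = (n.1 : G)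
        simp
      mul_smul := fun g h n => by
        apply Subtype.ext; apply Subtype.ext
        show ((g * h : H) : G) * (n.1 : G) * ((g * h : H) : G)⁻¹ =
          (g : G) * ((h : G) * (n.1 : G) * (h : G)⁻¹) * (g : G)⁻¹
        push_cast
        group }
  have hfree : ∀ (g : H) (a : {n : N // n ≠ 1}), g • a = a → g = 1 := by
    intro g a hga
    by_contra hg
    have hgG : (g : G) ≠ 1 := fun h => hg (OneMemClass.coe_eq_one.mp h)
    have hval : (g : G) * (a.1 : G) * (g : G)⁻¹ = (a.1 : G) :=
      congrArg (fun x : {n : N // n ≠ 1} => ((x.1 : N) : G)) hga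
    have hcomm : Commute (g : G) (a.1 : G) := mul_inv_eq_iff_eq_mul.mp hval
    exact a.2 (OneMemClass.coe_eq_one.mp (hc g g.2 hgG a.1 a.1.2 hcomm))
  have h1 : Nat.card {n : N // n ≠ 1} = Nat.card N - 1 := by
    haveI := Fintype.ofFinite N
    rw [Nat.card_eq_fintype_card, Nat.card_eq_fintype_card]
    have : Fintype.card {n : N // ¬ n = 1} = Fintype.card N - Fintype.card {n : N // n = 1} :=
      Fintype.card_subtype_compl _
    simpa [Fintype.card_subtype_eq] using this
  have hdvd : Nat.card H ∣ Nat.card N - 1 := h1 ▸ card_dvd_of_free_action hfree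
  have hpos : 0 < Nat.card N := Nat.card_pos
  exact Nat.Coprime.coprime_dvd_right hdvd
    ((Nat.coprime_self_sub_right hpos).mpr (Nat.coprime_one_right _))

private lemma card_map_of_ker_inf_eq_bot {G G' : Type*} [Group G] [Group G'] (f : G →* G')
    (H : Subgroup G) (h : f.ker ⊓ H = ⊥) : Nat.card (H.map f) = Nat.card H := by
  let g : H →* G' := f.comp H.subtype
  have hinj : Function.Injective g := by
    rw [← MonoidHom.ker_eq_bot_iff]
    ext x
    simp only [MonoidHom.mem_ker, Subgroup.mem_bot, g, MonoidHom.comp_apply,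
      Subgroup.coe_subtype]
    constructor
    · intro hx
      have hmem : (x : G) ∈ f.ker ⊓ H := ⟨hx, x.2⟩
      rw [h, Subgroup.mem_bot] at hmem
      exact Subtype.ext hmem
    · rintro rfl; simp
  have hr : H.map f = g.range := by
    rw [MonoidHom.range_comp, Subgroup.range_subtype]
  rw [hr]
  exact (Nat.card_congr (MonoidHom.ofInjective hinj).toEquiv).symm

private lemma card_eq_card_map_mul {G : Type*} [Group G] [Finite G] (K D : Subgroup G)
    [K.Normal] (hKD : K ≤ D) :
    Nat.card D = Nat.card (D.map (QuotientGroup.mk' K)) * Nat.card K := by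
  let f : D →* G ⧸ K := (QuotientGroup.mk' K).comp D.subtype
  have hker : f.ker = K.subgroupOf D := by
    ext x
    simp [f, MonoidHom.mem_ker, Subgroup.mem_subgroupOf, QuotientGroup.eq_one_iff]
  have hrange : f.range = D.map (QuotientGroup.mk' K) := by
    rw [MonoidHom.range_comp, Subgroup.range_subtype]
  calc Nat.card D = Nat.card (D ⧸ f.ker) * Nat.card f.ker :=
        Subgroup.card_eq_card_quotient_mul_card_subgroup f.ker
    _ = Nat.card (D.map (QuotientGroup.mk' K)) * Nat.card K := by
        rw [Nat.card_congr (QuotientGroup.quotientKerEquivRange f).toEquiv, hrange, hker,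
          Nat.card_congr (Subgroup.subgroupOfEquivOfLe hKD).toEquiv]

/-- The cyclic graph `Δ(G)`: vertices are the nonidentity elements of `G`,
with distinct `x` and `y` adjacent iff `⟨x, y⟩` is cyclic. -/
def cyclicGraph (G : Type*) [Group G] : SimpleGraph {x : G // x ≠ 1} where
  Adj x y := x ≠ y ∧ IsCyclic ↥(Subgroup.closure ({(x : G), (y : G)} : Set G))
  symm := by
    constructor
    rintro x y ⟨hne, hcyc⟩
    refine ⟨hne.symm, ?_⟩
    rwa [Set.pair_comm]
  loopless := ⟨fun x h => h.1 rfl⟩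

/-- `H` is a Frobenius complement of `K` in `L` (all subgroups of an ambient group `G`):
`H ≤ L`, `H` is nontrivial, `L = KH`, `K ⊓ H = 1`, and `C_K(h) = 1` for all `1 ≠ h ∈ H`. -/
def IsFrobeniusComplementIn {G : Type*} [Group G] (K L H : Subgroup G) : Prop :=
  H ≤ L ∧ H ≠ ⊥ ∧ (∀ x ∈ L, ∃ k ∈ K, ∃ h ∈ H, x = k * h) ∧ K ⊓ H = ⊥ ∧
    ∀ h ∈ H, h ≠ 1 → ∀ k ∈ K, Commute h k → k = 1

/-- `G` is a Frobenius group with kernel `K` and complement `H`. -/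
def IsFrobenius (G : Type*) [Group G] (K H : Subgroup G) : Prop :=
  K.Normal ∧ K ≠ ⊥ ∧ IsFrobeniusComplementIn K ⊤ H

/-- `G` is a 2-Frobenius group with respect to the normal subgroups `K ≤ L`:
`L` is a Frobenius group with kernel `K` (and some complement), and `G/K` is a
Frobenius group with kernel `L/K` (and some complement). -/
def Is2Frobenius (G : Type*) [Group G] (K L : Subgroup G) [K.Normal] [L.Normal] : Prop :=
  K ≠ ⊥ ∧ K < L ∧
    (∃ H : Subgroup G, IsFrobeniusComplementIn K L H) ∧
    (∃ C : Subgroup (G ⧸ K),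
      IsFrobeniusComplementIn (L.map (QuotientGroup.mk' K)) ⊤ C)

theorem D_is_Hall
    {G : Type*} [Group G] [Fintype G] (K L : Subgroup G) [K.Normal] [L.Normal]
    (h2 : Is2Frobenius G K L) (D : Subgroup G) (hKD : K ≤ D)
    (hD : IsFrobeniusComplementIn (L.map (QuotientGroup.mk' K)) ⊤
      (D.map (QuotientGroup.mk' K))) :
    Nat.Coprime (Nat.card D) D.index := by
  obtain ⟨hKbot, hKL, ⟨H', hH'⟩, -⟩ := h2
  set φ := QuotientGroup.mk' K with hφ
  have hsurj : Function.Surjective φ := QuotientGroup.mk'_surjective K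
  haveI : (L.map φ).Normal := Subgroup.Normal.map inferInstance φ hsurj
  -- complement in the quotient
  have hcompl : (L.map φ).IsComplement' (D.map φ) := by
    apply Subgroup.isComplement'_of_disjoint_and_mul_eq_univ
    · exact disjoint_iff.mpr hD.2.2.2.1
    · ext x
      simp only [Set.mem_univ, iff_true]
      obtain ⟨k, hk, h, hh, rfl⟩ := hD.2.2.1 x trivial
      exact Set.mul_mem_mul hk hh
  have hker : φ.ker ≤ D := by rw [hφ, QuotientGroup.ker_mk']; exact hKD
  have hindexD : D.index = Nat.card (L.map φ) := by
    rw [← Subgroup.index_map_eq D hsurj hker]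
    exact hcompl.index_eq_card
  have hcardD : Nat.card D = Nat.card (D.map φ) * Nat.card K :=
    card_eq_card_map_mul K D hKD
  -- card of L/K equals card of the Frobenius complement H'
  have hLbH : L.map φ = H'.map φ := by
    apply le_antisymm
    · rintro x ⟨l, hl, rfl⟩
      obtain ⟨k, hk, h, hh, rfl⟩ := hH'.2.2.1 l hl
      refine ⟨h, hh, ?_⟩
      have hk1 : φ k = 1 := (QuotientGroup.eq_one_iff k).mpr hk
      rw [map_mul, hk1, one_mul]
    · exact Subgroup.map_mono hH'.1
  have hcardLb : Nat.card (L.map φ) = Nat.card H' := by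
    rw [hLbH]
    exact card_map_of_ker_inf_eq_bot φ H'
      (by rw [hφ, QuotientGroup.ker_mk']; exact hH'.2.2.2.1)
  have c1 : Nat.Coprime (Nat.card K) (Nat.card H') :=
    frobenius_coprime K H' hH'.2.2.2.2
  have c2 : Nat.Coprime (Nat.card (L.map φ)) (Nat.card (D.map φ)) :=
    frobenius_coprime (L.map φ) (D.map φ) hD.2.2.2.2
  rw [hcardD, hindexD]
  exact Nat.Coprime.mul c2.symm (by rw [hcardLb]; exact c1)
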